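/- Let a_0 < a_1 < a_2 < ⋯ enumerate in increasing order the natural numbers whose odd part is congruent to 1 modulo 4 (with a_0 = 0, taking the convention that 0 is included). Then a_n + s_{a_n} = 2n + 1 for all n, where s_m = 1 + Σ_{k=0}^{m} j_k and j_k is the Jacobi sequence (j_0 = 0, j_k = (-1/k) for k ≥ 1). -/

import Mathlib

/-- The odd part of `n`: `n` divided by the largest power of `2` dividing `n`. -/
def oddPart (n : ℕ) : ℕ := n / 2 ^ (n.factorization 2)

/-- The Jacobi sequence: `j 0 = 0` and `j n = (-1/n)` (Jacobi symbol) for `n ≥ 1`. -/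
def jac (n : ℕ) : ℤ := if n = 0 then 0 else jacobiSym (-1) n

/-- `s n = 1 + Σ_{k=0}^n j k`. -/
def s (n : ℕ) : ℤ := 1 + ∑ k ∈ Finset.range (n + 1), jac k

lemma oddPart_odd {n : ℕ} (h : n ≠ 0) : Odd (oddPart n) :=
  Nat.odd_iff.mpr (Nat.two_dvd_ne_zero.mp (Nat.not_dvd_ordCompl Nat.prime_two h))

lemma jacobiSym_neg_one_two : jacobiSym (-1) 2 = 1 := by
  rw [← @jacobiSym.legendreSym.to_jacobiSym 2 ⟨Nat.prime_two⟩ (-1), legendreSym]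
  have h : ((-1 : ℤ) : ZMod 2) = 1 := by decide
  rw [h, map_one]

lemma jac_val {k : ℕ} (hk : k ≠ 0) :
    jac k = if oddPart k % 4 = 1 then 1 else -1 := by
  have hodd : Odd (oddPart k) := oddPart_odd hk
  have hne : oddPart k ≠ 0 := by
    rintro h; simp [h, Nat.odd_iff] at hodd
  have hfact : 2 ^ (k.factorization 2) * oddPart k = k :=
    Nat.ordProj_mul_ordCompl_eq_self k 2
  have : jacobiSym (-1) k = jacobiSym (-1) (oddPart k) := by
    conv_lhs => rw [← hfact]
    rw [jacobiSym.mul_right' _ (pow_ne_zero _ two_ne_zero) hne,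
      jacobiSym.pow_right, jacobiSym_neg_one_two, one_pow, one_mul]
  rw [jac, if_neg hk, this, jacobiSym.at_neg_one hodd]
  have h4 : oddPart k % 4 = 1 ∨ oddPart k % 4 = 3 := by
    have := Nat.odd_iff.mp hodd
    omega
  rcases h4 with h | h
  · rw [if_pos h, ZMod.χ₄_nat_one_mod_four h]
  · rw [if_neg (by omega), ZMod.χ₄_nat_three_mod_four h]

lemma sum_jac (m : ℕ) (hm : 1 ≤ m) :
    ∑ k ∈ Finset.range m, jac k =
      2 * ((Finset.range m).filter (fun k => k = 0 ∨ oddPart k % 4 = 1)).card - m - 1 := by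
  induction m with
  | zero => omega
  | succ n ih =>
    rcases Nat.eq_or_lt_of_le hm with h | h
    · simp [← h, jac, Finset.filter_singleton]
    · have hn : 1 ≤ n := by omega
      rw [Finset.sum_range_succ, ih hn, Finset.range_add_one,
        Finset.filter_insert]
      have hne : n ≠ 0 := by omega
      by_cases hP : n = 0 ∨ oddPart n % 4 = 1
      · rw [if_pos hP, Finset.card_insert_of_notMem (by simp), jac_val hne,
          if_pos (hP.resolve_left hne)]
        push_cast; ring
      · rw [if_neg hP, jac_val hne, if_neg (fun h => hP (Or.inr h))]
        push_cast; ring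

theorem a_add_s_a (a : ℕ → ℕ) (ha : StrictMono a)
    (hrange : ∀ m : ℕ, (m = 0 ∨ oddPart m % 4 = 1) ↔ ∃ n, a n = m) :
    ∀ n : ℕ, (a n : ℤ) + s (a n) = 2 * n + 1 := by
  intro n
  have hcard : ((Finset.range (a n + 1)).filter
      (fun k => k = 0 ∨ oddPart k % 4 = 1)).card = n + 1 := by
    have himg : (Finset.range (a n + 1)).filter (fun k => k = 0 ∨ oddPart k % 4 = 1)
        = (Finset.range (n + 1)).image a := by
      ext m
      simp only [Finset.mem_filter, Finset.mem_range, Finset.mem_image, Nat.lt_succ_iff]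
      constructor
      · rintro ⟨hle, hP⟩
        obtain ⟨k, hk⟩ := (hrange m).mp hP
        exact ⟨k, by rw [← hk] at hle; exact (ha.le_iff_le).mp hle, hk⟩
      · rintro ⟨k, hk, rfl⟩
        exact ⟨ha.monotone hk, (hrange (a k)).mpr ⟨k, rfl⟩⟩
    rw [himg, Finset.card_image_of_injective _ ha.injective, Finset.card_range]
  have hsum := sum_jac (a n + 1) (by omega)
  rw [hcard] at hsum
  rw [s, hsum]
  push_cast; ring
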